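/- Let X and U be real Hilbert spaces, a < c, (T(t))_{t∈[0,c−a]} a family of bounded linear operators on X with t ↦ T(t)z continuous for each z ∈ X and ‖T(t)‖ ≤ M, and B : U → X a bounded linear operator. Define the Gramian Ψ = ∫_a^c T(c−s) B B* T(c−s)* ds. Then the following are equivalent: (a) the reachable set {∫_a^c T(c−s) B u(s) ds : u ∈ L²([a,c], U)} is dense in X; (b) λ(λI + Ψ)^{-1} → 0 in the strong operator topology as λ → 0⁺, i.e. λ(λI+Ψ)^{-1}x → 0 in norm for every x ∈ X. -/

import Mathlib

open MeasureTheory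
open scoped Topology InnerProductSpace

section Aux

variable {X : Type*} [NormedAddCommGroup X] [InnerProductSpace ℝ X] [CompleteSpace X]

/-- weak continuity of the adjoint family. -/
theorem aux_weak_cont (a c : ℝ) (T : ℝ → X →L[ℝ] X)
    (hT_cont : ∀ z : X, ContinuousOn (fun t => T t z) (Set.Icc 0 (c - a)))
    (z x : X) :
    ContinuousOn (fun s => (⟪(ContinuousLinearMap.adjoint (T (c - s))) z, x⟫_ℝ)) (Set.Icc a c) := by
  have h1 : ContinuousOn (fun s => T (c - s) x) (Set.Icc a c) := by
    apply (hT_cont x).comp (continuous_const.sub continuous_id).continuousOn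
    intro s hs
    exact ⟨by simpa using hs.2, by simpa using sub_le_sub_left hs.1 c⟩
  have h2 : ContinuousOn (fun s => (⟪z, T (c - s) x⟫_ℝ)) (Set.Icc a c) :=
    (innerSL ℝ z).continuous.comp_continuousOn h1
  refine h2.congr fun s _ => ?_
  rw [ContinuousLinearMap.adjoint_inner_left]

theorem aux_adjoint_aesm (a c : ℝ) (hac : a < c) (T : ℝ → X →L[ℝ] X)
    (hT_cont : ∀ z : X, ContinuousOn (fun t => T t z) (Set.Icc 0 (c - a)))
    (z : X) :
    AEStronglyMeasurable (fun s => (ContinuousLinearMap.adjoint (T (c - s))) z)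
      (volume.restrict (Set.Icc a c)) := by
  set g : ℝ → X := fun s => (ContinuousLinearMap.adjoint (T (c - s))) z with hg
  -- countable dense subset of [a,c]
  set Qs : Set ℝ := Set.Icc a c ∩ Set.range ((↑) : ℚ → ℝ) with hQs
  have hQc : Qs.Countable := Set.countable_range _ |>.mono Set.inter_subset_right |>.mono (le_refl _)
  have hQne : Qs.Nonempty := by
    obtain ⟨q, hq1, hq2⟩ := exists_rat_btwn hac
    exact ⟨(q:ℝ), ⟨hq1.le, hq2.le⟩, ⟨q, rfl⟩⟩
  have hQdense : Set.Icc a c ⊆ closure Qs := by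
    intro s hs
    rw [Metric.mem_closure_iff]
    intro ε hε
    have hlt : max a (s - ε) < min c (s + ε) := by
      rcases lt_or_ge a (s + ε) with h | h
      · apply max_lt_iff.2
        constructor
        · exact lt_min_iff.2 ⟨hac, h⟩
        · exact lt_min_iff.2 ⟨by linarith [hs.2], by linarith⟩
      · linarith [hs.1]
    obtain ⟨q, hq1, hq2⟩ := exists_rat_btwn hlt
    refine ⟨(q:ℝ), ⟨⟨?_, ?_⟩, ⟨q, rfl⟩⟩, ?_⟩
    · exact le_of_lt (lt_of_le_of_lt (le_max_left _ _) hq1)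
    · exact le_of_lt (lt_of_lt_of_le hq2 (min_le_left _ _))
    · rw [Real.dist_eq, abs_lt]
      constructor
      · have := lt_of_lt_of_le hq2 (min_le_right _ _); linarith
      · have := lt_of_le_of_lt (le_max_right _ _) hq1; linarith
  obtain ⟨e, he⟩ := hQc.exists_eq_range hQne
  -- finite dimensional approximating subspaces
  set K : ℕ → Submodule ℝ X := fun n => Submodule.span ℝ (g '' (e '' Set.Iic n)) with hK
  have hKfin : ∀ n, FiniteDimensional ℝ (K n) := by
    intro n
    apply FiniteDimensional.span_of_finite
    exact ((Set.finite_Iic n).image e).image g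
  have hKmono : Monotone K := by
    intro m n hmn
    apply Submodule.span_mono
    exact Set.image_mono (Set.image_mono (Set.Iic_subset_Iic.2 hmn))
  -- the closed span of g over the rationals
  set Kc : Submodule ℝ X := (Submodule.span ℝ (g '' Qs)).topologicalClosure with hKc
  haveI : CompleteSpace Kc := (Submodule.isClosed_topologicalClosure _).completeSpace_coe
  -- every g s for s ∈ [a,c] lies in Kc
  have hmem : ∀ s ∈ Set.Icc a c, g s ∈ Kc := by
    intro s hs
    set w : X := g s - ↑(Submodule.orthogonalProjectionOnto Kc (g s)) with hw
    have hw_orth : w ∈ Kcᗮ := by rw [hw, ← Submodule.starProjection_apply]; exact Submodule.sub_starProjection_mem_orthogonal _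
    have hφq : ∀ q ∈ Qs, ⟪g q, w⟫_ℝ = 0 := by
      intro q hq
      exact (Submodule.mem_orthogonal Kc w).1 hw_orth (g q)
        (Submodule.le_topologicalClosure _ (Submodule.subset_span ⟨q, hq, rfl⟩))
    have hφs : ⟪g s, w⟫_ℝ = 0 := by
      have hF : IsClosed (Set.Icc a c ∩ (fun t => ⟪g t, w⟫_ℝ) ⁻¹' {0}) :=
        (aux_weak_cont a c T hT_cont z w).preimage_isClosed_of_isClosed isClosed_Icc
          isClosed_singleton
      have hsub : Qs ⊆ Set.Icc a c ∩ (fun t => ⟪g t, w⟫_ℝ) ⁻¹' {0} := by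
        intro q hq
        exact ⟨hq.1, hφq q hq⟩
      have := hF.closure_subset_iff.2 hsub (hQdense hs)
      exact this.2
    have hPw : ⟪(Submodule.orthogonalProjectionOnto Kc (g s) : X), w⟫_ℝ = 0 :=
      (Submodule.mem_orthogonal Kc w).1 hw_orth _ (Submodule.orthogonalProjectionOnto Kc (g s)).2
    have hww : ⟪w, w⟫_ℝ = 0 := by
      rw [hw, inner_sub_left, hφs, hPw, sub_zero]
    have : w = 0 := inner_self_eq_zero.1 hww
    have hgs : g s = ↑(Submodule.orthogonalProjectionOnto Kc (g s)) := by
      have := this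
      rw [hw, sub_eq_zero] at this
      exact this
    rw [hgs]; exact (Submodule.orthogonalProjectionOnto Kc (g s)).2
  -- measurable approximations via projections onto finite-dimensional subspaces
  have hmeas : ∀ n : ℕ, AEStronglyMeasurable
      (fun s => (Submodule.orthogonalProjectionOnto (K n) (g s) : X)) (volume.restrict (Set.Icc a c)) := by
    intro n
    haveI := hKfin n
    set b := stdOrthonormalBasis ℝ (K n) with hb
    have heq : ∀ s, (Submodule.orthogonalProjectionOnto (K n) (g s) : X)
        = ∑ i, ⟪g s, (b i : X)⟫_ℝ • (b i : X) := by
      intro s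
      rw [b.orthogonalProjectionOnto_apply_eq_sum]
      push_cast
      refine Finset.sum_congr rfl fun i _ => ?_
      rw [real_inner_comm]
    have : AEStronglyMeasurable (fun s => ∑ i, ⟪g s, (b i : X)⟫_ℝ • (b i : X))
        (volume.restrict (Set.Icc a c)) := by
      apply Finset.aestronglyMeasurable_fun_sum
      intro i _
      exact ((aux_weak_cont a c T hT_cont z (b i : X)).aestronglyMeasurable
        measurableSet_Icc).smul aestronglyMeasurable_const
    exact this.congr (Filter.Eventually.of_forall fun s => (heq s).symm)
  -- pointwise convergence of the projections
  have htend : ∀ s ∈ Set.Icc a c,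
      Filter.Tendsto (fun n => (Submodule.orthogonalProjectionOnto (K n) (g s) : X))
        Filter.atTop (𝓝 (g s)) := by
    intro s hs
    have hcl : g s ∈ closure (⋃ n, (K n : Set X)) := by
      have h1 : (Submodule.span ℝ (g '' Qs) : Set X) ⊆ ⋃ n, (K n : Set X) := by
        intro x hx
        have hdir : Directed (· ≤ ·) K := hKmono.directed_le
        have hx' : x ∈ ⨆ n, K n := by
          refine Submodule.span_le.2 ?_ hx
          intro y hy
          obtain ⟨q, hq, rfl⟩ := hy
          rw [he] at hq
          obtain ⟨m, rfl⟩ := hq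
          exact Submodule.mem_iSup_of_mem m
            (Submodule.subset_span ⟨e m, ⟨m, Set.mem_Iic.2 le_rfl, rfl⟩, rfl⟩)
        obtain ⟨n, hn⟩ := (Submodule.mem_iSup_of_directed _ hdir).1 hx'
        exact Set.mem_iUnion.2 ⟨n, hn⟩
      have h2 : (Kc : Set X) ⊆ closure (⋃ n, (K n : Set X)) := by
        rw [hKc]
        exact (closure_mono h1 : closure _ ⊆ _)
      exact h2 (hmem s hs)
    rw [Metric.tendsto_atTop]
    intro ε hε
    obtain ⟨y, hy, hyd⟩ := Metric.mem_closure_iff.1 hcl ε hε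
    obtain ⟨N, hyN⟩ := Set.mem_iUnion.1 hy
    refine ⟨N, fun n hn => ?_⟩
    have hyn : y ∈ K n := hKmono hn hyN
    have hbdd : BddBelow (Set.range fun x : K n => ‖g s - ↑x‖) := by
      refine ⟨0, fun r hr => ?_⟩
      obtain ⟨x, rfl⟩ := hr
      positivity
    have hmin : ‖g s - ↑(Submodule.orthogonalProjectionOnto (K n) (g s))‖ ≤ ‖g s - y‖ := by
      rw [← Submodule.starProjection_apply, Submodule.starProjection_minimal]
      exact ciInf_le_of_le hbdd (⟨y, hyn⟩ : K n) le_rfl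
    calc dist ((Submodule.orthogonalProjectionOnto (K n) (g s) : X)) (g s)
        = ‖g s - ↑(Submodule.orthogonalProjectionOnto (K n) (g s))‖ := by
          rw [dist_eq_norm, norm_sub_rev]
      _ ≤ ‖g s - y‖ := hmin
      _ < ε := by rw [← dist_eq_norm]; exact hyd
  apply aestronglyMeasurable_of_tendsto_ae Filter.atTop hmeas
  filter_upwards [ae_restrict_mem measurableSet_Icc] with s hs using htend s hs

/-- applying the strongly continuous family to a measurable function is measurable. -/
theorem aux_comp_aesm (a c : ℝ) (T : ℝ → X →L[ℝ] X)
    (hT_cont : ∀ z : X, ContinuousOn (fun t => T t z) (Set.Icc 0 (c - a)))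
    (v : ℝ → X) (hv : AEStronglyMeasurable v (volume.restrict (Set.Icc a c))) :
    AEStronglyMeasurable (fun s => T (c - s) (v s)) (volume.restrict (Set.Icc a c)) := by
  have hTx : ∀ x : X, AEStronglyMeasurable (fun s => T (c - s) x)
      (volume.restrict (Set.Icc a c)) := by
    intro x
    have h1 : ContinuousOn (fun s => T (c - s) x) (Set.Icc a c) := by
      apply (hT_cont x).comp (continuous_const.sub continuous_id).continuousOn
      intro s hs
      exact ⟨by simpa using hs.2, by simpa using sub_le_sub_left hs.1 c⟩
    exact h1.aestronglyMeasurable measurableSet_Icc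
  obtain ⟨w, hw, hvw⟩ := hv
  have key : AEStronglyMeasurable (fun s => T (c - s) (w s))
      (volume.restrict (Set.Icc a c)) := by
    have hmeasn : ∀ n : ℕ, AEStronglyMeasurable (fun s => T (c - s) (hw.approx n s))
        (volume.restrict (Set.Icc a c)) := by
      intro n
      set φ := hw.approx n with hφ
      have heq : ∀ s, T (c - s) (φ s)
          = ∑ x ∈ φ.range, Set.indicator (φ ⁻¹' {x}) (fun s' => T (c - s') x) s := by
        intro s
        rw [Finset.sum_eq_single (φ s)]
        · rw [Set.indicator_of_mem (by simp : s ∈ φ ⁻¹' {φ s})]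
        · intro x _ hx
          rw [Set.indicator_of_notMem]
          simp only [Set.mem_preimage, Set.mem_singleton_iff]
          exact fun h => hx h.symm
        · intro h
          exact absurd (SimpleFunc.mem_range_self φ s) h
      have : AEStronglyMeasurable
          (fun s => ∑ x ∈ φ.range, Set.indicator (φ ⁻¹' {x}) (fun s' => T (c - s') x) s)
          (volume.restrict (Set.Icc a c)) := by
        apply Finset.aestronglyMeasurable_fun_sum
        intro x _
        exact (hTx x).indicator (φ.measurableSet_preimage {x})
      exact this.congr (Filter.Eventually.of_forall fun s => (heq s).symm)
    apply aestronglyMeasurable_of_tendsto_ae Filter.atTop hmeasn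
    refine Filter.Eventually.of_forall fun s => ?_
    exact ((T (c - s)).continuous.tendsto (w s)).comp (hw.tendsto_approx s)
  refine key.congr ?_
  filter_upwards [hvw] with s hs
  rw [hs]

/-- integrability helper: a.e. strongly measurable and bounded on `Icc a c` implies
interval integrable. -/
theorem aux_intervalIntegrable {Y : Type*} [NormedAddCommGroup Y]
    (a c : ℝ) (hac : a ≤ c) (h : ℝ → Y) (C : ℝ)
    (hm : AEStronglyMeasurable h (volume.restrict (Set.Icc a c)))
    (hb : ∀ s ∈ Set.Icc a c, ‖h s‖ ≤ C) :
    IntervalIntegrable h volume a c := by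
  have hint : IntegrableOn h (Set.Icc a c) volume := by
    refine Integrable.mono' (g := fun _ => C) ?_ hm ?_
    · exact integrableOn_const measure_Icc_lt_top.ne
    · filter_upwards [ae_restrict_mem measurableSet_Icc] with s hs using hb s hs
  exact (hint.mono_set (by rw [Set.uIcc_of_le hac])).intervalIntegrable

end Aux

set_option maxHeartbeats 1000000 in
theorem linear_approx_controllability_iff_resolvent_tendsto_zero
    {X U : Type*}
    [NormedAddCommGroup X] [InnerProductSpace ℝ X] [CompleteSpace X]
    [NormedAddCommGroup U] [InnerProductSpace ℝ U] [CompleteSpace U]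
    (a c : ℝ) (hac : a < c) (M : ℝ)
    (T : ℝ → X →L[ℝ] X)
    (hT_cont : ∀ z : X, ContinuousOn (fun t => T t z) (Set.Icc 0 (c - a)))
    (hT_bdd : ∀ t ∈ Set.Icc (0:ℝ) (c - a), ‖T t‖ ≤ M)
    (B : U →L[ℝ] X)
    -- the controllability Gramian Ψ and its resolvent family R l = (l I + Ψ)⁻¹
    (Ψ : X →L[ℝ] X)
    (hΨ : ∀ z : X, Ψ z = ∫ s in a..c,
      T (c - s) (B ((ContinuousLinearMap.adjoint B)
        ((ContinuousLinearMap.adjoint (T (c - s))) z))))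
    (R : ℝ → X →L[ℝ] X)
    (hR : ∀ l : ℝ, 0 < l →
      (l • ContinuousLinearMap.id ℝ X + Ψ).comp (R l) = ContinuousLinearMap.id ℝ X ∧
      (R l).comp (l • ContinuousLinearMap.id ℝ X + Ψ) = ContinuousLinearMap.id ℝ X) :
    Dense {y : X | ∃ u : ℝ → U,
        MemLp u 2 (volume.restrict (Set.Icc a c)) ∧
        y = ∫ s in a..c, T (c - s) (B (u s))}
      ↔ ∀ z : X, Filter.Tendsto (fun l : ℝ => l • (R l z)) (𝓝[>] 0) (𝓝 0) := by
  classical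
  set μ := volume.restrict (Set.Icc a c) with hμdef
  haveI : IsFiniteMeasure μ := ⟨by
    rw [hμdef, Measure.restrict_apply_univ]; exact measure_Icc_lt_top⟩
  set S := {y : X | ∃ u : ℝ → U, MemLp u 2 μ ∧ y = ∫ s in a..c, T (c - s) (B (u s))} with hSdef
  have hM0 : 0 ≤ M := le_trans (norm_nonneg (T 0)) (hT_bdd 0 ⟨le_rfl, by linarith⟩)
  -- notation
  set g : X → ℝ → X := fun z s => (ContinuousLinearMap.adjoint (T (c - s))) z with hgdef
  set v : X → ℝ → U := fun z s => (ContinuousLinearMap.adjoint B) (g z s) with hvdef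
  set f : X → ℝ → X := fun z s => T (c - s) (B (v z s)) with hfdef
  have hcs : ∀ s ∈ Set.Icc a c, c - s ∈ Set.Icc (0:ℝ) (c - a) := by
    intro s hs
    exact ⟨by simpa using hs.2, by simpa using sub_le_sub_left hs.1 c⟩
  have hg_bdd : ∀ z : X, ∀ s ∈ Set.Icc a c, ‖g z s‖ ≤ M * ‖z‖ := by
    intro z s hs
    calc ‖g z s‖ ≤ ‖ContinuousLinearMap.adjoint (T (c - s))‖ * ‖z‖ :=
          (ContinuousLinearMap.adjoint (T (c - s))).le_opNorm z
      _ ≤ M * ‖z‖ := by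
          apply mul_le_mul_of_nonneg_right _ (norm_nonneg z)
          rw [LinearIsometryEquiv.norm_map]
          exact hT_bdd _ (hcs s hs)
  have hg_aesm : ∀ z : X, AEStronglyMeasurable (g z) μ := fun z =>
    aux_adjoint_aesm a c hac T hT_cont z
  have hv_aesm : ∀ z : X, AEStronglyMeasurable (v z) μ := fun z =>
    (ContinuousLinearMap.adjoint B).continuous.comp_aestronglyMeasurable (hg_aesm z)
  have hv_bdd : ∀ z : X, ∀ s ∈ Set.Icc a c, ‖v z s‖ ≤ ‖B‖ * (M * ‖z‖) := by
    intro z s hs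
    calc ‖v z s‖ ≤ ‖ContinuousLinearMap.adjoint B‖ * ‖g z s‖ :=
          (ContinuousLinearMap.adjoint B).le_opNorm _
      _ ≤ ‖B‖ * (M * ‖z‖) := by
          rw [LinearIsometryEquiv.norm_map]
          exact mul_le_mul_of_nonneg_left (hg_bdd z s hs) (norm_nonneg B)
  have hv_mem : ∀ z : X, MemLp (v z) 2 μ := by
    intro z
    refine MemLp.of_bound (hv_aesm z) (‖B‖ * (M * ‖z‖)) ?_
    filter_upwards [ae_restrict_mem measurableSet_Icc] with s hs using hv_bdd z s hs
  have hf_aesm : ∀ z : X, AEStronglyMeasurable (f z) μ :=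
    fun z => aux_comp_aesm a c T hT_cont (fun s => B (v z s))
      (B.continuous.comp_aestronglyMeasurable (hv_aesm z))
  have hf_bdd : ∀ z : X, ∀ s ∈ Set.Icc a c, ‖f z s‖ ≤ M * (‖B‖ * (‖B‖ * (M * ‖z‖))) := by
    intro z s hs
    calc ‖f z s‖ ≤ ‖T (c - s)‖ * ‖B (v z s)‖ := (T (c - s)).le_opNorm _
      _ ≤ M * (‖B‖ * (‖B‖ * (M * ‖z‖))) := by
          apply mul_le_mul (hT_bdd _ (hcs s hs)) _ (norm_nonneg _) hM0
          calc ‖B (v z s)‖ ≤ ‖B‖ * ‖v z s‖ := B.le_opNorm _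
            _ ≤ ‖B‖ * (‖B‖ * (M * ‖z‖)) :=
                mul_le_mul_of_nonneg_left (hv_bdd z s hs) (norm_nonneg B)
  have hf_int : ∀ z : X, IntervalIntegrable (f z) volume a c := fun z =>
    aux_intervalIntegrable a c hac.le (f z) _ (hf_aesm z) (hf_bdd z)
  -- interval integrability of the controlled trajectory integrand
  have hTBu_int : ∀ u : ℝ → U, MemLp u 2 μ →
      IntervalIntegrable (fun s => T (c - s) (B (u s))) volume a c := by
    intro u hu
    have hu1 : Integrable u μ := hu.integrable (by norm_num)
    have haesm : AEStronglyMeasurable (fun s => T (c - s) (B (u s))) μ :=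
      aux_comp_aesm a c T hT_cont (fun s => B (u s))
        (B.continuous.comp_aestronglyMeasurable hu.1)
    have hint : IntegrableOn (fun s => T (c - s) (B (u s))) (Set.Icc a c) volume := by
      refine Integrable.mono' (g := fun s => (M * ‖B‖) * ‖u s‖) ?_ haesm ?_
      · exact (hu1.norm.const_mul (M * ‖B‖))
      · filter_upwards [ae_restrict_mem measurableSet_Icc] with s hs
        calc ‖T (c - s) (B (u s))‖ ≤ ‖T (c - s)‖ * ‖B (u s)‖ := (T (c - s)).le_opNorm _
          _ ≤ M * (‖B‖ * ‖u s‖) := by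
              apply mul_le_mul (hT_bdd _ (hcs s hs)) (B.le_opNorm _) (norm_nonneg _) hM0
          _ = (M * ‖B‖) * ‖u s‖ := by ring
    exact (hint.mono_set (by rw [Set.uIcc_of_le hac.le])).intervalIntegrable
  -- interchange of inner product and interval integral
  have hinner_int : ∀ (x : X) (h : ℝ → X), IntervalIntegrable h volume a c →
      ⟪x, ∫ s in a..c, h s⟫_ℝ = ∫ s in a..c, ⟪x, h s⟫_ℝ := by
    intro x h hh
    exact ((innerSL ℝ x).intervalIntegral_comp_comm hh).symm
  -- key formula for the Gramian
  have hΨ_inner : ∀ z x : X, ⟪x, Ψ z⟫_ℝ = ∫ s in a..c, ⟪v x s, v z s⟫_ℝ := by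
    intro z x
    rw [hΨ z, hinner_int x _ (hf_int z)]
    refine intervalIntegral.integral_congr fun s _ => ?_
    rw [← ContinuousLinearMap.adjoint_inner_left (T (c - s)),
      ← ContinuousLinearMap.adjoint_inner_left B]
  -- nonnegativity
  have hΨ_nonneg : ∀ x : X, 0 ≤ ⟪x, Ψ x⟫_ℝ := by
    intro x
    rw [hΨ_inner x x]
    apply intervalIntegral.integral_nonneg hac.le
    intro s _
    exact real_inner_self_nonneg
  -- vanishing of the quadratic form gives vanishing of v z a.e.
  have hker0 : ∀ z : X, ⟪z, Ψ z⟫_ℝ = 0 →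
      (fun s => v z s) =ᵐ[volume.restrict (Set.Ioc a c)] 0 := by
    intro z hz
    have hq : ∫ s in Set.Ioc a c, ⟪v z s, v z s⟫_ℝ ∂volume = 0 := by
      rw [← intervalIntegral.integral_of_le hac.le, ← hΨ_inner z z, hz]
    have hq_int : IntegrableOn (fun s => ⟪v z s, v z s⟫_ℝ) (Set.Ioc a c) volume := by
      have := (aux_intervalIntegrable a c hac.le (fun s => ⟪v z s, v z s⟫_ℝ)
        ((‖B‖ * (M * ‖z‖)) * (‖B‖ * (M * ‖z‖)))
        (Continuous.comp_aestronglyMeasurable₂ continuous_inner (hv_aesm z) (hv_aesm z))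
        ?_) 
      · exact this.1
      · intro s hs
        show ‖⟪v z s, v z s⟫_ℝ‖ ≤ (‖B‖ * (M * ‖z‖)) * (‖B‖ * (M * ‖z‖))
        rw [real_inner_self_eq_norm_mul_norm, Real.norm_eq_abs,
          abs_of_nonneg (mul_self_nonneg _)]
        exact mul_le_mul (hv_bdd z s hs) (hv_bdd z s hs) (norm_nonneg _)
          (by positivity)
    have h0 : (fun s => ⟪v z s, v z s⟫_ℝ) =ᵐ[volume.restrict (Set.Ioc a c)] 0 := by
      refine (integral_eq_zero_iff_of_nonneg_ae ?_ hq_int).1 hq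
      exact Filter.Eventually.of_forall fun s => real_inner_self_nonneg
    filter_upwards [h0] with s hs
    simpa using inner_self_eq_zero.1 hs
  have hker : ∀ z : X, ⟪z, Ψ z⟫_ℝ = 0 → Ψ z = 0 := by
    intro z hz
    rw [hΨ z, intervalIntegral.integral_of_le hac.le]
    have : (fun s => T (c - s) (B (v z s))) =ᵐ[volume.restrict (Set.Ioc a c)] 0 := by
      filter_upwards [hker0 z hz] with s hs
      simp only [hvdef, hgdef] at hs ⊢
      rw [hs]
      simp
    rw [integral_congr_ae this]
    simp
  -- the resolvent bound
  have hRbound : ∀ l : ℝ, 0 < l → ∀ y : X, l * ‖R l y‖ ≤ ‖y‖ := by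
    intro l hl y
    have hy : l • (R l y) + Ψ (R l y) = y := by
      have := congrArg (fun A : X →L[ℝ] X => A y) (hR l hl).1
      simpa using this
    set x := R l y with hx
    have h1 : l * (‖x‖ * ‖x‖) ≤ ⟪y, x⟫_ℝ := by
      rw [← hy, inner_add_left, real_inner_smul_left]
      have h2 : 0 ≤ ⟪Ψ x, x⟫_ℝ := by rw [real_inner_comm]; exact hΨ_nonneg x
      nlinarith [real_inner_self_eq_norm_mul_norm x]
    have h3 : ⟪y, x⟫_ℝ ≤ ‖y‖ * ‖x‖ := real_inner_le_norm y x
    rcases eq_or_lt_of_le (norm_nonneg x) with h4 | h4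
    · rw [← h4]; simpa using norm_nonneg y
    · have := le_trans h1 h3
      calc l * ‖x‖ = l * (‖x‖ * ‖x‖) / ‖x‖ := by field_simp
        _ ≤ ‖y‖ * ‖x‖ / ‖x‖ := by
            gcongr
        _ = ‖y‖ := by field_simp
  constructor
  · -- density of the reachable set implies the resolvent condition
    intro hDense z
    -- injectivity of the Gramian
    have hinj : ∀ w : X, Ψ w = 0 → w = 0 := by
      intro w hw
      have horth : ∀ y ∈ S, ⟪w, y⟫_ℝ = 0 := by
        rintro y ⟨u, hu, rfl⟩
        by_cases hint : IntervalIntegrable (fun s => T (c - s) (B (u s))) volume a c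
        · rw [hinner_int w _ hint, intervalIntegral.integral_of_le hac.le]
          have hvz : (fun s => v w s) =ᵐ[volume.restrict (Set.Ioc a c)] 0 :=
            hker0 w (by rw [hw, inner_zero_right])
          have hzero : (fun s => ⟪w, T (c - s) (B (u s))⟫_ℝ)
              =ᵐ[volume.restrict (Set.Ioc a c)] 0 := by
            filter_upwards [hvz] with s hs
            show ⟪w, T (c - s) (B (u s))⟫_ℝ = 0
            rw [← ContinuousLinearMap.adjoint_inner_left (T (c - s)),
              ← ContinuousLinearMap.adjoint_inner_left B]
            have hs' : v w s = 0 := hs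
            show ⟪v w s, u s⟫_ℝ = 0
            rw [hs', inner_zero_left]
          rw [integral_congr_ae hzero]
          simp
        · rw [intervalIntegral.integral_undef hint, inner_zero_right]
      have hall : ∀ y : X, ⟪w, y⟫_ℝ = 0 := by
        have hclosed : IsClosed {y : X | ⟪w, y⟫_ℝ = 0} := by
          have : {y : X | ⟪w, y⟫_ℝ = 0} = (innerSL ℝ w) ⁻¹' {0} := rfl
          rw [this]
          exact IsClosed.preimage (innerSL ℝ w).continuous isClosed_singleton
        have hsub : S ⊆ {y : X | ⟪w, y⟫_ℝ = 0} := fun y hy => horth y hy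
        have := hclosed.closure_subset_iff.2 hsub
        rw [hDense.closure_eq] at this
        exact fun y => this (Set.mem_univ y)
      have := hall w
      rwa [inner_self_eq_zero] at this
    -- dense range of the Gramian
    have hdenseR : Dense ((LinearMap.range (Ψ : X →ₗ[ℝ] X) : Submodule ℝ X) : Set X) := by
      have hbot : (LinearMap.range (Ψ : X →ₗ[ℝ] X))ᗮ = ⊥ := by
        rw [Submodule.eq_bot_iff]
        intro w hw
        have h1 : ⟪Ψ w, w⟫_ℝ = 0 :=
          (Submodule.mem_orthogonal _ w).1 hw _ (LinearMap.mem_range_self (Ψ : X →ₗ[ℝ] X) w)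
        exact hinj w (hker w (by rw [real_inner_comm]; exact h1))
      have h3 : (LinearMap.range (Ψ : X →ₗ[ℝ] X)).topologicalClosure = ⊤ := by
        rw [← Submodule.orthogonal_orthogonal_eq_closure, hbot,
          Submodule.bot_orthogonal_eq_top]
      exact Submodule.dense_iff_topologicalClosure_eq_top.2 h3
    rw [Metric.tendsto_nhdsWithin_nhds]
    intro ε hε
    obtain ⟨y, hy, hyd⟩ := Metric.mem_closure_iff.1 (hdenseR z) (ε/2) (by positivity)
    obtain ⟨w, rfl⟩ := LinearMap.mem_range.1 hy
    refine ⟨ε / (4 * (‖w‖ + 1)), by positivity, ?_⟩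
    intro l hl hld
    have hl0 : 0 < l := hl
    have hld' : l < ε / (4 * (‖w‖ + 1)) := by
      rwa [Real.dist_eq, sub_zero, abs_of_pos hl0] at hld
    rw [dist_zero_right]
    have hsplit : R l z = R l (z - Ψ w) + R l (Ψ w) := by
      rw [← map_add, sub_add_cancel]
    have h5 : l • R l w + R l (Ψ w) = w := by
      have := congrArg (fun A : X →L[ℝ] X => A w) (hR l hl0).2
      simpa [map_add] using this
    have hB : l • R l (Ψ w) = l • w - l • (l • R l w) := by
      rw [← smul_sub]
      congr 1
      rw [eq_sub_iff_add_eq, add_comm]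
      exact h5
    have hw1 : 0 < ‖w‖ + 1 := by positivity
    calc ‖l • R l z‖ = ‖l • R l (z - Ψ w) + l • R l (Ψ w)‖ := by rw [hsplit, smul_add]
      _ ≤ ‖l • R l (z - Ψ w)‖ + ‖l • R l (Ψ w)‖ := norm_add_le _ _
      _ < ε/2 + ε/2 := by
          apply add_lt_add_of_le_of_lt
          · rw [norm_smul, Real.norm_eq_abs, abs_of_pos hl0]
            calc l * ‖R l (z - Ψ w)‖ ≤ ‖z - Ψ w‖ := hRbound l hl0 _
              _ ≤ ε/2 := by rw [← dist_eq_norm]; exact hyd.le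
          · rw [hB]
            have hb1 : ‖l • (l • R l w)‖ ≤ l * ‖w‖ := by
              rw [norm_smul, norm_smul, Real.norm_eq_abs, abs_of_pos hl0]
              exact mul_le_mul_of_nonneg_left (hRbound l hl0 w) hl0.le
            calc ‖l • w - l • (l • R l w)‖ ≤ ‖l • w‖ + ‖l • (l • R l w)‖ := norm_sub_le _ _
              _ ≤ l * ‖w‖ + l * ‖w‖ := by
                  apply add_le_add _ hb1
                  rw [norm_smul, Real.norm_eq_abs, abs_of_pos hl0]
              _ < ε/2 := by
                  have h6 : l * ‖w‖ ≤ l * (‖w‖ + 1) := by nlinarith [norm_nonneg w]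
                  have h7 : l * (‖w‖ + 1) < ε / 4 := by
                    have h8 : l * (‖w‖ + 1) < ε / (4 * (‖w‖ + 1)) * (‖w‖ + 1) :=
                      mul_lt_mul_of_pos_right hld' hw1
                    have h9 : ε / (4 * (‖w‖ + 1)) * (‖w‖ + 1) = ε / 4 := by
                      rw [div_mul_eq_mul_div, mul_comm (4:ℝ) (‖w‖ + 1),
                        ← div_div, mul_div_assoc, div_self hw1.ne', mul_one]
                    linarith
                  linarith
      _ = ε := by ring
  · -- resolvent condition implies density of the reachable set
    intro htend
    have hS0 : (0:X) ∈ S := ⟨0, MemLp.zero, by simp⟩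
    have hSadd : ∀ x y : X, x ∈ S → y ∈ S → x + y ∈ S := by
      rintro _ _ ⟨u1, hu1, rfl⟩ ⟨u2, hu2, rfl⟩
      refine ⟨u1 + u2, hu1.add hu2, ?_⟩
      rw [← intervalIntegral.integral_add (hTBu_int u1 hu1) (hTBu_int u2 hu2)]
      refine intervalIntegral.integral_congr fun s _ => ?_
      show T (c - s) (B (u1 s)) + T (c - s) (B (u2 s)) = T (c - s) (B ((u1 + u2) s))
      rw [Pi.add_apply, B.map_add, (T (c - s)).map_add]
    have hSsmul : ∀ (r : ℝ) (x : X), x ∈ S → r • x ∈ S := by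
      rintro r _ ⟨u, hu, rfl⟩
      refine ⟨r • u, hu.const_smul r, ?_⟩
      rw [← intervalIntegral.integral_smul]
      refine intervalIntegral.integral_congr fun s _ => ?_
      show r • T (c - s) (B (u s)) = T (c - s) (B ((r • u) s))
      rw [Pi.smul_apply, B.map_smul, (T (c - s)).map_smul]
    set KS : Submodule ℝ X :=
      { carrier := S,
        add_mem' := fun hx hy => hSadd _ _ hx hy,
        zero_mem' := hS0,
        smul_mem' := fun r x hx => hSsmul r x hx } with hKSdef
    have hKSorth : KSᗮ = ⊥ := by
      rw [Submodule.eq_bot_iff]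
      intro z hz
      have hΨz : Ψ z ∈ S := ⟨v z, hv_mem z, hΨ z⟩
      have h1 : ⟪Ψ z, z⟫_ℝ = 0 := (Submodule.mem_orthogonal KS z).1 hz _ hΨz
      have h2 : Ψ z = 0 := hker z (by rw [real_inner_comm]; exact h1)
      have h3 : ∀ l : ℝ, 0 < l → l • R l z = z := by
        intro l hl
        have h4 := congrArg (fun A : X →L[ℝ] X => A z) (hR l hl).2
        simp only [ContinuousLinearMap.coe_comp', Function.comp_apply,
          ContinuousLinearMap.add_apply, ContinuousLinearMap.coe_smul',
          Pi.smul_apply, ContinuousLinearMap.coe_id', id_eq] at h4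
        rw [h2, add_zero, ContinuousLinearMap.map_smul] at h4
        exact h4
      have h4 : Filter.Tendsto (fun _ : ℝ => z) (𝓝[>] (0:ℝ)) (𝓝 0) := by
        refine (htend z).congr' ?_
        filter_upwards [self_mem_nhdsWithin] with l hl
        exact h3 l hl
      exact tendsto_nhds_unique tendsto_const_nhds h4
    have h5 : KS.topologicalClosure = ⊤ := by
      rw [← Submodule.orthogonal_orthogonal_eq_closure, hKSorth,
        Submodule.bot_orthogonal_eq_top]
    exact Submodule.dense_iff_topologicalClosure_eq_top.2 h5
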